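/- Let n, d be positive integers, let B be an n×d real matrix with rows b_1, …, b_n, and let A = B Bᵀ. Suppose i ≠ j are indices such that b_i and b_j are nonzero, and let φ = arccos(⟨b_i, b_j⟩ / (‖b_i‖‖b_j‖)) be the angle between b_i and b_j. Then the smallest eigenvalue of A satisfies λ_min(A) ≤ (2‖b_i‖²‖b_j‖² / (‖b_i‖² + ‖b_j‖²)) · (1 − cos φ), and consequently λ_min(A) ≤ (‖b_i‖²‖b_j‖² / (‖b_i‖² + ‖b_j‖²)) · φ². -/

import Mathlib

open scoped RealInnerProductSpace

lemma rayleigh_aux {n : ℕ} (hn : 0 < n) {A : Matrix (Fin n) (Fin n) ℝ}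
    (hA : A.IsHermitian) (x : EuclideanSpace ℝ (Fin n)) :
    sInf (spectrum ℝ A) * ‖x‖ ^ 2 ≤ ⟪x, Matrix.toEuclideanLin A x⟫ := by
  have : Nonempty (Fin n) := ⟨⟨0, hn⟩⟩
  have hm : ∀ k, sInf (spectrum ℝ A) ≤ hA.eigenvalues k := fun k =>
    csInf_le (A.finite_spectrum.bddBelow) (hA.eigenvalues_mem_spectrum_real k)
  set B := hA.eigenvectorBasis with hB
  set T := Matrix.toEuclideanLin A with hT
  have hS : T.IsSymmetric := Matrix.isHermitian_iff_isSymmetric.1 hA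
  have hTB : ∀ k, T (B k) = hA.eigenvalues k • B k := by
    intro k
    ext l
    exact congrFun (hA.mulVec_eigenvectorBasis k) l
  have key : ⟪x, T x⟫ = ∑ k, hA.eigenvalues k * ⟪B k, x⟫ ^ 2 := by
    rw [← B.sum_inner_mul_inner x (T x)]
    refine Finset.sum_congr rfl fun k _ => ?_
    rw [← hS (B k) x, hTB k, real_inner_smul_left, real_inner_comm x (B k)]
    ring
  have hnorm : ‖x‖ ^ 2 = ∑ k, ⟪B k, x⟫ ^ 2 := by
    rw [← real_inner_self_eq_norm_sq, ← B.sum_inner_mul_inner x x]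
    refine Finset.sum_congr rfl fun k _ => ?_
    rw [real_inner_comm x (B k)]; ring
  rw [key, hnorm, Finset.mul_sum]
  exact Finset.sum_le_sum fun k _ =>
    mul_le_mul_of_nonneg_right (hm k) (sq_nonneg _)


/-- Proposition 2.2, quantitative form, upper bound on `λ_min`.
`b 1, …, b n` are the rows of an `n × d` real matrix `B` (viewed as vectors of
`EuclideanSpace ℝ (Fin d)`), and `A = B Bᵀ` is the Gram matrix of the rows, i.e.
`A k l = ⟪b k, b l⟫`.  `sInf (spectrum ℝ A)` is the smallest eigenvalue of `A`.
If `i ≠ j`, `b i, b j ≠ 0` and `φ` is the angle between `b i` and `b j`, then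
`λ_min(A) ≤ (2‖b i‖²‖b j‖²/(‖b i‖² + ‖b j‖²))·(1 − cos φ)` and consequently
`λ_min(A) ≤ (‖b i‖²‖b j‖²/(‖b i‖² + ‖b j‖²))·φ²`. -/
theorem smallest_eigenvalue_le_of_small_angle
    {n d : ℕ} (hn : 0 < n) (hd : 0 < d)
    (b : Fin n → EuclideanSpace ℝ (Fin d))
    (A : Matrix (Fin n) (Fin n) ℝ)
    (hA : ∀ k l, A k l = ⟪b k, b l⟫)
    (i j : Fin n) (hij : i ≠ j) (hbi : b i ≠ 0) (hbj : b j ≠ 0)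
    (φ : ℝ) (hφ : φ = InnerProductGeometry.angle (b i) (b j)) :
    sInf (spectrum ℝ A) ≤
      2 * ‖b i‖ ^ 2 * ‖b j‖ ^ 2 / (‖b i‖ ^ 2 + ‖b j‖ ^ 2) * (1 - Real.cos φ) ∧
    sInf (spectrum ℝ A) ≤
      ‖b i‖ ^ 2 * ‖b j‖ ^ 2 / (‖b i‖ ^ 2 + ‖b j‖ ^ 2) * φ ^ 2 := by
  
  have hA' : A.IsHermitian := by
    ext k l
    simp only [Matrix.conjTranspose_apply, star_trivial, hA]
    exact real_inner_comm _ _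
  have hbi' : (0:ℝ) < ‖b i‖ := norm_pos_iff.2 hbi
  have hbj' : (0:ℝ) < ‖b j‖ := norm_pos_iff.2 hbj
  have hs : (0:ℝ) < ‖b i‖ ^ 2 + ‖b j‖ ^ 2 := by positivity
  -- the test vector
  set x : EuclideanSpace ℝ (Fin n) :=
    (WithLp.equiv 2 (Fin n → ℝ)).symm
      (fun k => if k = i then ‖b j‖ else if k = j then -‖b i‖ else 0) with hx
  have hxfun : ∀ k, x k = if k = i then ‖b j‖ else if k = j then -‖b i‖ else 0 := fun k => rfl
  have hsum : ∀ (y : Fin n → ℝ),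
      ∑ l, y l * x l = y i * ‖b j‖ - y j * ‖b i‖ := by
    intro y
    have h1 : ∀ l, y l * x l =
        (if l = i then y l * ‖b j‖ else 0) + (if l = j then y l * (-‖b i‖) else 0) := by
      intro l
      rcases eq_or_ne l i with rfl | hli
      · simp [hxfun, hij]
      · rcases eq_or_ne l j with rfl | hlj
        · simp [hxfun, hli]
        · simp [hxfun, hli, hlj]
    simp only [h1, Finset.sum_add_distrib, Finset.sum_ite_eq', Finset.mem_univ, if_true]
    ring
  have hAij : A i j = Real.cos φ * (‖b i‖ * ‖b j‖) := by
    rw [hA, hφ, InnerProductGeometry.cos_angle, div_mul_cancel₀]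
    positivity
  have hAji : A j i = Real.cos φ * (‖b i‖ * ‖b j‖) := by
    rw [hA, real_inner_comm, ← hA i j, hAij]
  have hAii : A i i = ‖b i‖ ^ 2 := by rw [hA, real_inner_self_eq_norm_sq]
  have hAjj : A j j = ‖b j‖ ^ 2 := by rw [hA, real_inner_self_eq_norm_sq]
  have hinner : ⟪x, Matrix.toEuclideanLin A x⟫ =
      2 * ‖b i‖ ^ 2 * ‖b j‖ ^ 2 * (1 - Real.cos φ) := by
    have h0 : ⟪x, Matrix.toEuclideanLin A x⟫ = ∑ k, x k * (A.mulVec x) k := by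
      simp [PiLp.inner_apply, Matrix.toEuclideanLin_apply]
      exact Finset.sum_congr rfl fun _ _ => mul_comm _ _
    have h1 : ∀ k, (A.mulVec x) k = A k i * ‖b j‖ - A k j * ‖b i‖ := by
      intro k
      rw [Matrix.mulVec, dotProduct]
      exact hsum (fun l => A k l)
    rw [h0]
    have h2 : ∀ k, x k * (A.mulVec x) k =
        (fun l => (A l i * ‖b j‖ - A l j * ‖b i‖)) k * x k := by
      intro k; rw [h1 k]; ring
    rw [Finset.sum_congr rfl fun k _ => h2 k, hsum]
    rw [hAii, hAjj, hAij, hAji]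
    ring
  have hnx : ‖x‖ ^ 2 = ‖b i‖ ^ 2 + ‖b j‖ ^ 2 := by
    rw [← real_inner_self_eq_norm_sq]
    have h0 : ⟪x, x⟫ = ∑ k, x k * x k := by
      rw [PiLp.inner_apply]
      exact Finset.sum_congr rfl fun _ _ => by simp [sq]
    rw [h0, hsum]
    simp [hxfun, hij.symm]
    ring
  have hray := rayleigh_aux hn hA' x
  rw [hinner, hnx] at hray
  have key1 : sInf (spectrum ℝ A) ≤
      2 * ‖b i‖ ^ 2 * ‖b j‖ ^ 2 / (‖b i‖ ^ 2 + ‖b j‖ ^ 2) * (1 - Real.cos φ) := by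
    rw [show 2 * ‖b i‖ ^ 2 * ‖b j‖ ^ 2 / (‖b i‖ ^ 2 + ‖b j‖ ^ 2) * (1 - Real.cos φ)
        = 2 * ‖b i‖ ^ 2 * ‖b j‖ ^ 2 * (1 - Real.cos φ) / (‖b i‖ ^ 2 + ‖b j‖ ^ 2) by ring,
      le_div_iff₀ hs]
    linarith
  refine ⟨key1, le_trans key1 ?_⟩
  have hsin : Real.sin (φ / 2) ^ 2 ≤ (φ / 2) ^ 2 := Real.sin_sq_le_sq
  have hcos2 : Real.cos φ = 2 * Real.cos (φ / 2) ^ 2 - 1 := by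
    rw [← Real.cos_two_mul]; ring_nf
  have hcossin : Real.cos (φ / 2) ^ 2 = 1 - Real.sin (φ / 2) ^ 2 := by
    rw [Real.cos_sq']
  have h2c : 2 * (1 - Real.cos φ) ≤ φ ^ 2 := by nlinarith
  have hc : (0:ℝ) ≤ ‖b i‖ ^ 2 * ‖b j‖ ^ 2 / (‖b i‖ ^ 2 + ‖b j‖ ^ 2) := by positivity
  calc 2 * ‖b i‖ ^ 2 * ‖b j‖ ^ 2 / (‖b i‖ ^ 2 + ‖b j‖ ^ 2) * (1 - Real.cos φ)
      = ‖b i‖ ^ 2 * ‖b j‖ ^ 2 / (‖b i‖ ^ 2 + ‖b j‖ ^ 2) * (2 * (1 - Real.cos φ)) := by ring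
    _ ≤ ‖b i‖ ^ 2 * ‖b j‖ ^ 2 / (‖b i‖ ^ 2 + ‖b j‖ ^ 2) * φ ^ 2 :=
        mul_le_mul_of_nonneg_left h2c hc
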